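/- In the exact-cover reduction instance with 3k elements and tests of size exactly 3: (a) any deterministic schedule satisfies, at every time t, max_e T(e,t) ≥ k; (b) at every time t, (1/(3k)) Σ_e T(e,t) ≥ (k+1)/2; and (c) equality in (a) or (b) at time t holds only if the k tests following time t form an exact cover of the 3k elements. -/

import Mathlib

open Finset
open scoped ENNReal Classical

/-- Waiting time (counted from 1): the number of probes from time `t`
(inclusive) until the first test containing `e` is invoked; `∞` if `e` is
never tested again. -/
noncomputable def detTime {ι E : Type*} (S : ι → Finset E) (σ : ℕ → ι)
    (e : E) (t : ℕ) : ℝ≥0∞ :=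
  ∑' s : ℕ, if ∀ u < s, e ∉ S (σ (t + u)) then 1 else 0

lemma detTime_ge {ι E : Type*} (S : ι → Finset E) (σ : ℕ → ι) (e : E) (t n : ℕ)
    (h : ∀ u < n, e ∉ S (σ (t + u))) : ((n : ℝ≥0∞) + 1) ≤ detTime S σ e t := by
  calc (n : ℝ≥0∞) + 1 = ∑ _s ∈ Finset.range (n+1), (1:ℝ≥0∞) := by simp
  _ = ∑ s ∈ Finset.range (n+1),
        (if ∀ u < s, e ∉ S (σ (t+u)) then (1:ℝ≥0∞) else 0) := by
      refine Finset.sum_congr rfl fun s hs => ?_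
      rw [if_pos]
      intro u hu
      exact h u (lt_of_lt_of_le hu (Nat.lt_succ_iff.mp (Finset.mem_range.mp hs)))
  _ ≤ _ := ENNReal.sum_le_tsum _

lemma gaussAux : ∀ n : ℕ, 2 * ∑ s ∈ Finset.range n, (n - s) = n * (n + 1) := by
  intro n
  induction n with
  | zero => simp
  | succ n ih =>
    rw [Finset.sum_range_succ]
    have h1 : ∀ s ∈ Finset.range n, n + 1 - s = (n - s) + 1 := fun s hs => by
      have := Finset.mem_range.mp hs; omega
    rw [Finset.sum_congr rfl h1, Finset.sum_add_distrib, Finset.sum_const, Finset.card_range]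
    have h2 : n + 1 - n = 1 := by omega
    simp only [smul_eq_mul, mul_one, h2]
    ring_nf
    ring_nf at ih
    linarith [ih]

lemma coverLemma {ι : Type*} (k : ℕ) (hk : 0 < k) (S : ι → Finset (Fin (3*k)))
    (hS : ∀ i, (S i).card = 3) (σ : ℕ → ι) (t : ℕ)
    (hcov : ∀ e : Fin (3*k), ∃ d < k, e ∈ S (σ (t + d))) :
    (∀ d₁ ∈ Finset.range k, ∀ d₂ ∈ Finset.range k, d₁ ≠ d₂ →
        Disjoint (S (σ (t + d₁))) (S (σ (t + d₂)))) ∧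
      (Finset.range k).biUnion (fun d => S (σ (t + d))) = Finset.univ := by
  classical
  have hex : ∀ e : Fin (3*k), ∃ d, e ∈ S (σ (t+d)) := fun e => (hcov e).imp (fun d h => h.2)
  set φ : Fin (3*k) → ℕ := fun e => Nat.find (hex e) with hφ
  have hφlt : ∀ e, φ e < k := by
    intro e; obtain ⟨d, hd, hmem⟩ := hcov e
    exact lt_of_le_of_lt (Nat.find_min' (hex e) hmem) hd
  have hφmem : ∀ e, e ∈ S (σ (t + φ e)) := fun e => Nat.find_spec (hex e)
  set F : ℕ → Finset (Fin (3*k)) := fun d => univ.filter (fun e => φ e = d) with hF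
  have hFsub : ∀ d, F d ⊆ S (σ (t+d)) := by
    intro d e he
    have h := (Finset.mem_filter.mp he).2
    rw [← h]; exact hφmem e
  have hcardsum : ∑ d ∈ Finset.range k, (F d).card = 3 * k := by
    have := Finset.card_eq_sum_card_fiberwise (f := φ) (s := univ) (t := Finset.range k)
      (fun e _ => Finset.mem_range.mpr (hφlt e))
    rw [← this]; simp
  have hFle : ∀ d ∈ Finset.range k, (F d).card ≤ 3 := fun d _ => by
    calc (F d).card ≤ (S (σ (t+d))).card := Finset.card_le_card (hFsub d)
    _ = 3 := hS _
  have hFeq3 : ∀ d ∈ Finset.range k, (F d).card = 3 := by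
    by_contra hcon; push_neg at hcon
    obtain ⟨d, hd, hne⟩ := hcon
    have hlt : (F d).card < 3 := lt_of_le_of_ne (hFle d hd) hne
    have hlt2 : ∑ d ∈ Finset.range k, (F d).card < ∑ _d ∈ Finset.range k, 3 :=
      Finset.sum_lt_sum hFle ⟨d, hd, hlt⟩
    rw [hcardsum, Finset.sum_const, Finset.card_range, smul_eq_mul] at hlt2
    omega
  have hFeqS : ∀ d ∈ Finset.range k, F d = S (σ (t+d)) := fun d hd =>
    Finset.eq_of_subset_of_card_le (hFsub d) (by rw [hS, hFeq3 d hd])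
  constructor
  · intro d₁ h₁ d₂ h₂ hne
    rw [← hFeqS d₁ h₁, ← hFeqS d₂ h₂, Finset.disjoint_left]
    intro a ha₁ ha₂
    exact hne (((Finset.mem_filter.mp ha₁).2).symm.trans ((Finset.mem_filter.mp ha₂).2))
  · apply Finset.eq_univ_of_forall
    intro e
    obtain ⟨d, hd, hmem⟩ := hcov e
    exact Finset.mem_biUnion.mpr ⟨d, Finset.mem_range.mpr hd, hmem⟩

/-- Exact-cover reduction instance: `3k` elements, tests of size exactly `3`.
For any deterministic schedule `σ`:
(a) at every time, some element has waiting time at least `k`;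
(b) at every time, the average waiting time `(1/(3k))·∑_e T(e,t)` is at least
`(k+1)/2`;
(c) equality in (a) (i.e. all waiting times at most `k`) or in (b) can hold at
time `t` only if the `k` tests following `t` form an exact cover. -/
theorem stmt_14 {ι : Type*} (k : ℕ) (hk : 0 < k)
    (S : ι → Finset (Fin (3 * k))) (hS : ∀ i, (S i).card = 3)
    (σ : ℕ → ι) :
    (∀ t, ∃ e, (k : ℝ≥0∞) ≤ detTime S σ e t) ∧
    (∀ t, ((k : ℝ≥0∞) + 1) / 2
        ≤ (1 / (3 * (k : ℝ≥0∞))) * ∑ e, detTime S σ e t) ∧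
    (∀ t, ((∀ e, detTime S σ e t ≤ (k : ℝ≥0∞)) ∨
        (1 / (3 * (k : ℝ≥0∞))) * (∑ e, detTime S σ e t) = ((k : ℝ≥0∞) + 1) / 2) →
      ((∀ d₁ ∈ Finset.range k, ∀ d₂ ∈ Finset.range k, d₁ ≠ d₂ →
          Disjoint (S (σ (t + d₁))) (S (σ (t + d₂)))) ∧
        (Finset.range k).biUnion (fun d => S (σ (t + d))) = Finset.univ)) := by
  classical
  set A : ℕ → ℕ → Finset (Fin (3*k)) :=
    fun t s => univ.filter (fun e => ∀ u < s, e ∉ S (σ (t+u))) with hAdef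
  -- card bound
  have hA : ∀ t s, 3 * k ≤ (A t s).card + 3 * s := by
    intro t s
    have hsub : (univ : Finset (Fin (3*k))) ⊆
        A t s ∪ (Finset.range s).biUnion (fun u => S (σ (t+u))) := by
      intro e _
      by_cases h : ∀ u < s, e ∉ S (σ (t+u))
      · exact Finset.mem_union_left _ (Finset.mem_filter.mpr ⟨Finset.mem_univ e, h⟩)
      · push_neg at h
        obtain ⟨u, hu, hmem⟩ := h
        exact Finset.mem_union_right _ (Finset.mem_biUnion.mpr ⟨u, Finset.mem_range.mpr hu, hmem⟩)
    calc 3 * k = (univ : Finset (Fin (3*k))).card := by simp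
    _ ≤ (A t s ∪ (Finset.range s).biUnion (fun u => S (σ (t+u)))).card :=
        Finset.card_le_card hsub
    _ ≤ (A t s).card + ((Finset.range s).biUnion (fun u => S (σ (t+u)))).card :=
        Finset.card_union_le _ _
    _ ≤ (A t s).card + ∑ u ∈ Finset.range s, (S (σ (t+u))).card :=
        Nat.add_le_add_left Finset.card_biUnion_le _
    _ = (A t s).card + 3 * s := by simp [hS, mul_comm]
  -- layer cake
  have hSum : ∀ t, ∑ e, detTime S σ e t = ∑' s : ℕ, ((A t s).card : ℝ≥0∞) := by
    intro t
    rw [← tsum_fintype (L := SummationFilter.unconditional _)]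
    unfold detTime
    rw [ENNReal.tsum_comm]
    congr 1
    funext s
    rw [tsum_fintype]
    have hrfl : A t s = univ.filter (fun e => ∀ u < s, e ∉ S (σ (t+u))) := rfl
    rw [hrfl]
    convert Finset.sum_boole (R := ℝ≥0∞) (fun e => ∀ u < s, e ∉ S (σ (t+u))) univ using 2
    congr!
  -- part (a)
  have parta : ∀ t, ∃ e, (k:ℝ≥0∞) ≤ detTime S σ e t := by
    intro t
    have h3 : 0 < (A t (k-1)).card := by have := hA t (k-1); omega
    obtain ⟨e, he⟩ := Finset.card_pos.mp h3
    refine ⟨e, ?_⟩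
    have he' := (Finset.mem_filter.mp he).2
    have hge := detTime_ge S σ e t (k-1) he'
    have hcast : ((k-1 : ℕ) : ℝ≥0∞) + 1 = (k : ℝ≥0∞) := by
      have : (k-1 : ℕ) + 1 = k := by omega
      rw [← this]; push_cast; ring
    rwa [hcast] at hge
  -- ℕ-valued lower bound for the sum over range k
  have hN : ∀ t, 3*k*(k+1) ≤ 2 * ∑ s ∈ Finset.range k, (A t s).card := by
    intro t
    have h1 : ∑ s ∈ Finset.range k, 3*(k - s) ≤ ∑ s ∈ Finset.range k, (A t s).card :=
      Finset.sum_le_sum (fun s hs => by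
        have := hA t s; have := Finset.mem_range.mp hs; omega)
    have h2 := gaussAux k
    calc 3*k*(k+1) = 2 * (3 * ∑ s ∈ Finset.range k, (k-s)) := by rw [mul_assoc, ← h2]; ring
    _ = 2 * ∑ s ∈ Finset.range k, 3*(k-s) := by rw [Finset.mul_sum]
    _ ≤ 2 * ∑ s ∈ Finset.range k, (A t s).card := Nat.mul_le_mul_left 2 h1
  have hcastsum : ∀ t (m : ℕ),
      ((∑ s ∈ Finset.range m, (A t s).card : ℕ) : ℝ≥0∞) ≤ ∑ e, detTime S σ e t := by
    intro t m
    rw [hSum t, Nat.cast_sum]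
    exact ENNReal.sum_le_tsum _
  have h3k0 : (3 * (k:ℝ≥0∞)) ≠ 0 :=
    mul_ne_zero (by norm_num) (Nat.cast_ne_zero.mpr hk.ne')
  have h3kt : (3 * (k:ℝ≥0∞)) ≠ ⊤ := by
    simp [ENNReal.mul_ne_top, ENNReal.natCast_ne_top]
  -- part (b)
  have partb : ∀ t, ((k:ℝ≥0∞)+1)/2 ≤ (1/(3*(k:ℝ≥0∞))) * ∑ e, detTime S σ e t := by
    intro t
    have hfin : ((3*k*(k+1) : ℕ) : ℝ≥0∞) ≤ (∑ e, detTime S σ e t) * 2 := by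
      calc ((3*k*(k+1):ℕ):ℝ≥0∞) ≤ ((2 * ∑ s ∈ Finset.range k, (A t s).card : ℕ):ℝ≥0∞) :=
          Nat.cast_le.mpr (hN t)
      _ = ((∑ s ∈ Finset.range k, (A t s).card : ℕ):ℝ≥0∞) * 2 := by push_cast; ring
      _ ≤ _ := mul_le_mul_left (hcastsum t k) 2
    rw [one_div, ← ENNReal.div_eq_inv_mul,
      ENNReal.le_div_iff_mul_le (Or.inl h3k0) (Or.inl h3kt)]
    have hrw : ((k:ℝ≥0∞)+1)/2 * (3*(k:ℝ≥0∞)) = (((k:ℝ≥0∞)+1) * (3*(k:ℝ≥0∞))) / 2 := by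
      rw [div_eq_mul_inv, div_eq_mul_inv]; ring
    rw [hrw, ENNReal.div_le_iff_le_mul (Or.inl two_ne_zero) (Or.inl ENNReal.ofNat_ne_top)]
    calc ((k:ℝ≥0∞)+1) * (3*(k:ℝ≥0∞)) = ((3*k*(k+1) : ℕ) : ℝ≥0∞) := by push_cast; ring
    _ ≤ _ := hfin
  refine ⟨parta, partb, ?_⟩
  -- part (c)
  intro t hyp
  apply coverLemma k hk S hS σ t
  rcases hyp with hall | heq
  · -- all waiting times ≤ k
    intro e
    by_contra hcon
    push_neg at hcon
    have hge := detTime_ge S σ e t k hcon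
    have hlt : (k:ℝ≥0∞) < (k:ℝ≥0∞) + 1 :=
      ENNReal.lt_add_right (ENNReal.natCast_ne_top k) one_ne_zero
    exact absurd (le_trans hge (hall e)) (not_le.mpr hlt)
  · -- average equality
    set Tot := ∑ e, detTime S σ e t with hTot
    have hTotne : Tot ≠ ⊤ := by
      intro h
      rw [h] at heq
      rw [ENNReal.mul_top (by simpa [one_div] using ENNReal.inv_ne_zero.mpr h3kt)] at heq
      have : ((k:ℝ≥0∞)+1)/2 ≠ ⊤ :=
        (ENNReal.div_lt_top (by simp [ENNReal.add_ne_top]) two_ne_zero).ne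
      exact this heq.symm
    have hTotval : Tot = ((k:ℝ≥0∞)+1)/2 * (3*(k:ℝ≥0∞)) := by
      have h := congrArg (· * (3*(k:ℝ≥0∞))) heq
      rw [one_div, mul_comm ((3*(k:ℝ≥0∞))⁻¹) Tot, mul_assoc,
        ENNReal.inv_mul_cancel h3k0 h3kt, mul_one] at h
      exact h
    have h2S : Tot * 2 = ((k:ℝ≥0∞)+1) * (3*(k:ℝ≥0∞)) := by
      calc Tot * 2 = ((k:ℝ≥0∞)+1) * (3*(k:ℝ≥0∞)) * (2⁻¹ * 2) := by
            rw [hTotval, div_eq_mul_inv]; ring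
      _ = ((k:ℝ≥0∞)+1) * (3*(k:ℝ≥0∞)) := by
            rw [ENNReal.inv_mul_cancel two_ne_zero ENNReal.ofNat_ne_top, mul_one]
    intro e
    by_contra hcon
    push_neg at hcon
    have heA : e ∈ A t k := Finset.mem_filter.mpr ⟨Finset.mem_univ e, hcon⟩
    have hcard : 1 ≤ (A t k).card := Finset.card_pos.mpr ⟨e, heA⟩
    have hN' : 3*k*(k+1) + 2 ≤ 2 * ∑ s ∈ Finset.range (k+1), (A t s).card := by
      rw [Finset.sum_range_succ]
      have := hN t
      omega
    have hbig : ((3*k*(k+1) + 2 : ℕ) : ℝ≥0∞) ≤ Tot * 2 := by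
      calc ((3*k*(k+1)+2:ℕ):ℝ≥0∞) ≤ ((2 * ∑ s ∈ Finset.range (k+1), (A t s).card : ℕ):ℝ≥0∞) :=
          Nat.cast_le.mpr hN'
      _ = ((∑ s ∈ Finset.range (k+1), (A t s).card : ℕ):ℝ≥0∞) * 2 := by push_cast; ring
      _ ≤ _ := mul_le_mul_left (hcastsum t (k+1)) 2
    rw [h2S] at hbig
    have : ((3*k*(k+1) + 2 : ℕ) : ℝ≥0∞) ≤ ((3*k*(k+1) : ℕ) : ℝ≥0∞) := by
      calc ((3*k*(k+1)+2:ℕ):ℝ≥0∞) ≤ ((k:ℝ≥0∞)+1) * (3*(k:ℝ≥0∞)) := hbig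
      _ = ((3*k*(k+1):ℕ):ℝ≥0∞) := by push_cast; ring
    have := Nat.cast_le.mp this
    omega
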